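/- Let ε > 0 be a real number, let G = (V, E, A) be a mixed graph on a finite vertex set V whose underlying graph UG(G) is connected and whose undirected edge set E forms a forest, let k = |A| ≥ 1, and let w : V → ℕ. Let D₀ be an orientation of G such that R(D₀,w) ≥ R(D,w) − (ε/(196·k²))·(∑_{v∈V} w(v))² holds (as an inequality of real numbers) for every orientation D of G. Then D₀ is (1−ε)-optimal for (G,w), i.e. R(D₀,w) ≥ (1−ε)·R(D,w) for every orientation D of G. -/

import Mathlib

open Finset

variable {V : Type*}

-- `kappa A u v = 1` if `v` is reachable from `u` in the digraph with arc relation `A`.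
open Classical in
noncomputable def kappa (A : V → V → Prop) (u v : V) : ℕ :=
  if Relation.ReflTransGen A u v then 1 else 0

/-- `R(D, w) = 2 ∑_v C(w(v), 2) + ∑_{(u,v), u ≠ v} w(u) w(v) κ_D(u,v)`. -/
noncomputable def Rw [Fintype V] [DecidableEq V] (A : V → V → Prop) (w : V → ℕ) : ℕ :=
  2 * ∑ v, Nat.choose (w v) 2 +
    ∑ p ∈ Finset.univ.offDiag, w p.1 * w p.2 * kappa A p.1 p.2

/-- A mixed graph: a set of undirected edges (unordered pairs of distinct vertices)
together with a set of arcs (ordered pairs of distinct vertices). -/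
structure MixedGraph (V : Type*) where
  edges : Finset (Sym2 V)
  arcs : Finset (V × V)
  edges_not_diag : ∀ e ∈ edges, ¬ e.IsDiag
  arcs_ne : ∀ a ∈ arcs, a.1 ≠ a.2

namespace MixedGraph

/-- The simple graph formed by the undirected edges of `G`. -/
def edgeGraph (G : MixedGraph V) : SimpleGraph V where
  Adj u v := s(u, v) ∈ G.edges
  symm := by
    constructor
    intro u v h
    rwa [Sym2.eq_swap] at h
  loopless := by
    constructor
    intro v h
    exact G.edges_not_diag _ h (Sym2.mk_isDiag_iff.mpr rfl)

/-- The underlying graph of `G`: edges plus (forgotten) arcs. -/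
def UG (G : MixedGraph V) : SimpleGraph V where
  Adj u v := s(u, v) ∈ G.edges ∨ (u, v) ∈ G.arcs ∨ (v, u) ∈ G.arcs
  symm := by
    constructor
    intro u v h
    rcases h with h | h | h
    · left; rwa [Sym2.eq_swap] at h
    · right; right; exact h
    · right; left; exact h
  loopless := by
    constructor
    intro v h
    rcases h with h | h | h
    · exact G.edges_not_diag _ h (Sym2.mk_isDiag_iff.mpr rfl)
    · exact G.arcs_ne _ h rfl
    · exact G.arcs_ne _ h rfl

/-- The arc relation of the orientation of `G` determined by the choice `o` of
directions for the undirected edges: all arcs of `G` together with the arcs of `o`. -/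
def dig (G : MixedGraph V) (o : V → V → Prop) : V → V → Prop :=
  fun u v => (u, v) ∈ G.arcs ∨ o u v

/-- The set of vertices incident to an arc of `G`. -/
def arcVerts (G : MixedGraph V) : Set V := {v | ∃ a ∈ G.arcs, a.1 = v ∨ a.2 = v}

/-- `G` is dismembered: every undirected component of `G` contains at most one vertex
incident to an arc, or contains exactly two vertices incident to arcs, each of them
incident to exactly one arc. -/
def Dismembered [DecidableEq V] (G : MixedGraph V) : Prop :=
  ∀ c : G.edgeGraph.ConnectedComponent,
    (c.supp ∩ G.arcVerts).Subsingleton ∨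
      ∃ a b : V, a ≠ b ∧ c.supp ∩ G.arcVerts = {a, b} ∧
        (G.arcs.filter fun p => p.1 = a ∨ p.2 = a).card = 1 ∧
        (G.arcs.filter fun p => p.1 = b ∨ p.2 = b).card = 1

/-- The edges of the undirected component `c` of `G`. -/
def compEdges (G : MixedGraph V) (c : G.edgeGraph.ConnectedComponent) :
    Set (Sym2 V) := {e | e ∈ G.edges ∧ ∀ v ∈ e, v ∈ c.supp}

end MixedGraph

/-- `o` chooses exactly one direction for each edge in `E'`, and relates nothing else.
Orientations of a mixed graph `G` correspond to choices `o` with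
`OrientsEdges ↑G.edges o`, the orientation being the digraph `G.dig o`. -/
def OrientsEdges (E' : Set (Sym2 V)) (o : V → V → Prop) : Prop :=
  (∀ u v, o u v → s(u, v) ∈ E') ∧ (∀ u v, s(u, v) ∈ E' → (o u v ↔ ¬ o v u))

/-- The orientation of the undirected component `c` inherited from the
edge-orientation `o`. -/
def inheritO (G : MixedGraph V) (c : G.edgeGraph.ConnectedComponent)
    (o : V → V → Prop) : V → V → Prop :=
  fun u v => o u v ∧ u ∈ c.supp ∧ v ∈ c.supp

/-- The edge-orientation obtained from `o` by reorienting the edges of the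
undirected component `c` according to `oT` (this is `D⟨T'⟩`). -/
def replaceO (G : MixedGraph V) (c : G.edgeGraph.ConnectedComponent)
    (o oT : V → V → Prop) : V → V → Prop :=
  fun u v => (o u v ∧ (u ∉ c.supp ∨ v ∉ c.supp)) ∨ oT u v

/-- `𝒯` is an optimal replacement set for `((G, w), T)` where `T` is the undirected
component `c`. -/
def IsOptReplacementSet [Fintype V] [DecidableEq V] (G : MixedGraph V) (w : V → ℕ)
    (c : G.edgeGraph.ConnectedComponent) (𝒯 : Set (V → V → Prop)) : Prop :=
  (∀ oT ∈ 𝒯, OrientsEdges (G.compEdges c) oT) ∧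
    ∀ o, OrientsEdges (G.edges : Set (Sym2 V)) o →
      ∃ oT ∈ 𝒯, Rw (G.dig o) w ≤ Rw (G.dig (replaceO G c o oT)) w

/-- `𝒯` is a `δ`-optimal replacement set for `((G, w), T)` where `T` is the
undirected component `c`. -/
def IsApproxReplacementSet [Fintype V] [DecidableEq V] (G : MixedGraph V) (w : V → ℕ)
    (c : G.edgeGraph.ConnectedComponent) (δ : ℝ) (𝒯 : Set (V → V → Prop)) : Prop :=
  (∀ oT ∈ 𝒯, OrientsEdges (G.compEdges c) oT) ∧
    ∀ o, OrientsEdges (G.edges : Set (Sym2 V)) o →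
      ∃ oT ∈ 𝒯, (Rw (G.dig o) w : ℝ) - δ * (∑ v, (w v : ℝ)) ^ 2
        ≤ (Rw (G.dig (replaceO G c o oT)) w : ℝ)

open Finset SimpleGraph

section Tree
variable {V : Type*} [DecidableEq V] {F : SimpleGraph V} {r x y : V}

omit [DecidableEq V] in
lemma exists_closer (hr : F.Reachable x r) (hx : x ≠ r) :
    ∃ z, F.Adj x z ∧ F.dist z r + 1 = F.dist x r := by
  obtain ⟨p, hp, hl⟩ := hr.exists_path_of_dist
  obtain ⟨z, hadj, q, rfl⟩ := Walk.exists_eq_cons_of_ne hx p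
  refine ⟨z, hadj, ?_⟩
  have h1 : F.dist z r ≤ q.length := SimpleGraph.dist_le q
  have h2 : F.dist x r ≤ F.dist z r + 1 := by
    obtain ⟨q', hq'⟩ := ((hadj.symm.reachable).trans hr).exists_walk_length_eq_dist
    have := SimpleGraph.dist_le (Walk.cons hadj q')
    simpa [hq'] using this
  have h3 : (Walk.cons hadj q).length = q.length + 1 := by simp
  omega

open scoped Classical in
noncomputable def toward (F : SimpleGraph V) (r x : V) : V :=
  if h : F.Reachable x r ∧ x ≠ r then (exists_closer h.1 h.2).choose else x

lemma toward_adj (hr : F.Reachable x r) (hx : x ≠ r) : F.Adj x (toward F r x) := by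
  rw [toward, dif_pos ⟨hr, hx⟩]
  exact (exists_closer hr hx).choose_spec.1

lemma toward_dist (hr : F.Reachable x r) (hx : x ≠ r) :
    F.dist (toward F r x) r + 1 = F.dist x r := by
  rw [toward, dif_pos ⟨hr, hx⟩]
  exact (exists_closer hr hx).choose_spec.2

lemma toward_reachable (hr : F.Reachable x r) (hx : x ≠ r) :
    F.Reachable (toward F r x) r :=
  ((toward_adj hr hx).symm.reachable).trans hr

lemma toward_eq_of_path (hF : F.IsAcyclic) (hr : F.Reachable x r) (hx : x ≠ r) {z : V}
    (hadj : F.Adj x z) (q : F.Walk z r) (hq : (Walk.cons hadj q).IsPath) :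
    toward F r x = z := by
  have h0adj := toward_adj hr hx
  have hd := toward_dist hr hx
  obtain ⟨q₀, hq₀, hl₀⟩ := (toward_reachable hr hx).exists_path_of_dist
  have hx0 : x ∉ q₀.support := by
    intro hmem
    have h1 := SimpleGraph.dist_le (q₀.dropUntil x hmem)
    have h2 := Walk.length_dropUntil_le q₀ hmem
    omega
  have hp₀ : (Walk.cons h0adj q₀).IsPath := hq₀.cons hx0
  have := hF.path_unique ⟨Walk.cons h0adj q₀, hp₀⟩ ⟨Walk.cons hadj q, hq⟩
  have hsup := congrArg (fun p : F.Path x r => (p : F.Walk x r).support) this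
  simp only [Walk.support_cons] at hsup
  rw [q₀.support_eq_cons, q.support_eq_cons] at hsup
  exact ((List.cons.injEq _ _ _ _).mp ((List.cons.injEq _ _ _ _).mp hsup).2).1

lemma toward_parent (hF : F.IsAcyclic) (hadj : F.Adj x y) (hxr : F.Reachable x r)
    (hyr : F.Reachable y r) : toward F r x = y ∨ toward F r y = x := by
  by_cases hx : x = r
  · subst hx
    refine Or.inr (toward_eq_of_path hF hyr (Ne.symm hadj.ne) hadj.symm Walk.nil ?_)
    simp [Walk.cons_isPath_iff, hadj.ne']
  by_cases hy : y = r
  · subst hy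
    refine Or.inl (toward_eq_of_path hF hxr hadj.ne hadj Walk.nil ?_)
    simp [Walk.cons_isPath_iff, hadj.ne]
  obtain ⟨p, hp, hl⟩ := hyr.exists_path_of_dist
  by_cases hmem : x ∈ p.support
  · refine Or.inr (toward_eq_of_path hF hyr hy hadj.symm (p.dropUntil x hmem) ?_)
    refine (hp.dropUntil hmem).cons ?_
    intro hyd
    have hspec := p.take_spec hmem
    have hnd : p.support.Nodup := hp.support_nodup
    rw [← hspec, Walk.support_append] at hnd
    have hytake : y ∈ (p.takeUntil x hmem).support := Walk.start_mem_support _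
    have hytail : y ∈ (p.dropUntil x hmem).support.tail := by
      rw [(p.dropUntil x hmem).support_eq_cons] at hyd
      rcases List.mem_cons.mp hyd with h | h
      · exact absurd h hadj.ne'
      · exact h
    exact (List.disjoint_of_nodup_append hnd) hytake hytail
  · exact Or.inl (toward_eq_of_path hF hxr hx hadj p (hp.cons hmem))

end Tree
section Anc
variable {V : Type*} [DecidableEq V] {F : SimpleGraph V} {r : V}

/-- One step toward the root `r`. -/
def ancStep (F : SimpleGraph V) (r : V) (a b : V) : Prop :=
  F.Reachable a r ∧ a ≠ r ∧ b = toward F r a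

/-- `anc F r a b` : `b` lies on the path from `a` to the root `r`. -/
def anc (F : SimpleGraph V) (r : V) : V → V → Prop :=
  Relation.ReflTransGen (ancStep F r)

lemma ancStep_dist {a b : V} (h : ancStep F r a b) : F.dist b r + 1 = F.dist a r := by
  obtain ⟨h1, h2, rfl⟩ := h
  exact toward_dist h1 h2

lemma ancStep_reachable {a b : V} (h : ancStep F r a b) : F.Reachable b r := by
  obtain ⟨h1, h2, rfl⟩ := h
  exact toward_reachable h1 h2

lemma ancStep_adj {a b : V} (h : ancStep F r a b) : F.Adj a b := by
  obtain ⟨h1, h2, rfl⟩ := h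
  exact toward_adj h1 h2

lemma anc_dist {a b : V} (h : anc F r a b) : F.dist b r ≤ F.dist a r := by
  induction h with
  | refl => exact le_refl _
  | tail _ hstep ih =>
    have := ancStep_dist hstep
    omega

lemma anc_reachable_ab {a b : V} (h : anc F r a b) : F.Reachable a b := by
  induction h with
  | refl => rfl
  | tail _ hstep ih => exact ih.trans (ancStep_adj hstep).reachable

lemma anc_to_root : ∀ n x, F.dist x r ≤ n → F.Reachable x r → anc F r x r := by
  intro n
  induction n with
  | zero =>
    intro x hd hreach
    have : F.dist x r = 0 := by omega
    have : x = r := (hreach.dist_eq_zero_iff).mp this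
    exact this ▸ Relation.ReflTransGen.refl
  | succ n ih =>
    intro x hd hreach
    by_cases hx : x = r
    · exact hx ▸ Relation.ReflTransGen.refl
    · have hstep : ancStep F r x (toward F r x) := ⟨hreach, hx, rfl⟩
      have hdist := toward_dist hreach hx
      exact Relation.ReflTransGen.head hstep
        (ih _ (by omega) (toward_reachable hreach hx))

lemma anc_root {x : V} (hreach : F.Reachable x r) : anc F r x r :=
  anc_to_root (F.dist x r) x le_rfl hreach

lemma anc_comparable {u a : V} (hua : anc F r u a) : ∀ {b}, anc F r u b →
    anc F r a b ∨ anc F r b a := by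
  induction hua using Relation.ReflTransGen.head_induction_on with
  | refl => intro b hub; exact Or.inl hub
  | head hstep _ ih =>
    intro b hub
    rcases (Relation.ReflTransGen.cases_head hub) with rfl | ⟨c, hc, hcb⟩
    · exact Or.inr (Relation.ReflTransGen.head hstep (by assumption))
    · obtain ⟨_, _, h1⟩ := hc
      obtain ⟨_, _, h2⟩ := hstep
      exact ih ((h2.trans h1.symm) ▸ hcb)
end Anc
section Reach
variable {V : Type*} [DecidableEq V] {F : SimpleGraph V} {r : V}

lemma reach_target (o : V → V → Prop) (t : V) (X : Set V)
    (h : ∀ a ∈ X, F.Reachable a r ∧ a ≠ r ∧ o a (toward F r a) ∧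
      (toward F r a ∈ X ∨ toward F r a = t)) :
    ∀ a ∈ X, Relation.ReflTransGen o a t := by
  suffices H : ∀ n, ∀ a ∈ X, F.dist a r ≤ n → Relation.ReflTransGen o a t by
    intro a ha; exact H (F.dist a r) a ha le_rfl
  intro n
  induction n with
  | zero =>
    intro a ha hd
    obtain ⟨h1, h2, _, _⟩ := h a ha
    have : F.dist a r = 0 := by omega
    exact absurd (h1.dist_eq_zero_iff.mp this) h2
  | succ n ih =>
    intro a ha hd
    obtain ⟨h1, h2, h3, h4⟩ := h a ha
    have hdist := toward_dist h1 h2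
    rcases h4 with h4 | h4
    · exact Relation.ReflTransGen.head h3 (ih _ h4 (by omega))
    · exact h4 ▸ Relation.ReflTransGen.single h3
 
lemma reach_along (o : V → V → Prop) {v₀ : V}
    (hup : ∀ a b, ancStep F r a b → anc F r v₀ a → o a b) :
    ∀ x, anc F r v₀ x → Relation.ReflTransGen o v₀ x := by
  intro x h
  induction h with
  | refl => exact Relation.ReflTransGen.refl
  | tail hab hstep ih => exact ih.tail (hup _ _ hstep hab)

lemma descend (o : V → V → Prop) (v₀ : V) (X : Set V)
    (hv₀r : F.Reachable v₀ r)
    (hXup : ∀ b, F.Reachable b r → b ≠ r → toward F r b ∈ X → b ∈ X)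
    (hU : ∀ x, anc F r v₀ x → Relation.ReflTransGen o v₀ x)
    (hdown : ∀ b, F.Reachable b r → b ≠ r → b ∉ X → ¬ anc F r v₀ b →
      o (toward F r b) b) :
    ∀ b, F.Reachable b r → b ∉ X → Relation.ReflTransGen o v₀ b := by
  suffices H : ∀ n, ∀ b, F.Reachable b r → b ∉ X → F.dist b r ≤ n →
      Relation.ReflTransGen o v₀ b by
    intro b hb hbX; exact H (F.dist b r) b hb hbX le_rfl
  intro n
  induction n with
  | zero =>
    intro b hb hbX hd
    have : F.dist b r = 0 := by omega
    have hbr0 : b = r := hb.dist_eq_zero_iff.mp this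
    subst hbr0
    exact hU _ (anc_root hv₀r)
  | succ n ih =>
    intro b hb hbX hd
    by_cases hanc : anc F r v₀ b
    · exact hU b hanc
    · have hbr : b ≠ r := by
        rintro rfl
        exact hanc (anc_root hv₀r)
      have hdist := toward_dist hb hbr
      have h1 : toward F r b ∉ X := fun hmem => hbX (hXup b hb hbr hmem)
      have h2 := ih (toward F r b) (toward_reachable hb hbr) h1 (by omega)
      exact h2.tail (hdown b hb hbr hbX hanc)

end Reach

lemma greedy_subset {α : Type*} [DecidableEq α] (W : ℕ) (f : α → ℕ) (t : Finset α)
    (hb : ∀ x ∈ t, 7 * f x ≤ 3 * W) :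
    ∃ u ⊆ t, 7 * ∑ x ∈ u, f x ≤ 4 * W ∧ (W ≤ 7 * ∑ x ∈ u, f x ∨ u = t) := by
  classical
  induction t using Finset.induction with
  | empty => exact ⟨∅, Finset.Subset.refl _, by simp, Or.inr rfl⟩
  | @insert a s hna ih =>
    obtain ⟨u, hu, h4, hor⟩ := ih (fun x hx => hb x (Finset.mem_insert_of_mem hx))
    rcases hor with h | rfl
    · exact ⟨u, hu.trans (Finset.subset_insert _ _), h4, Or.inl h⟩
    · by_cases hW : W ≤ 7 * ∑ x ∈ u, f x
      · exact ⟨u, Finset.subset_insert _ _, h4, Or.inl hW⟩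
      · refine ⟨insert a u, Finset.Subset.refl _, ?_, Or.inr rfl⟩
        rw [Finset.sum_insert hna, Nat.mul_add]
        have := hb a (Finset.mem_insert_self a u)
        omega

lemma Rw_lb {V : Type*} [Fintype V] [DecidableEq V] (Arel : V → V → Prop) (w : V → ℕ)
    (r : V) (Pr : Finset (V × V)) (hsub : Pr ⊆ Finset.univ.offDiag)
    (hreach : ∀ p ∈ Pr, Relation.ReflTransGen Arel p.1 p.2) :
    2 * Nat.choose (w r) 2 + ∑ p ∈ Pr, w p.1 * w p.2 ≤ Rw Arel w := by
  unfold Rw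
  have h1 : Nat.choose (w r) 2 ≤ ∑ v, Nat.choose (w v) 2 :=
    Finset.single_le_sum (f := fun v => Nat.choose (w v) 2)
      (fun i _ => Nat.zero_le _) (Finset.mem_univ r)
  have h2 : ∑ p ∈ Pr, w p.1 * w p.2 ≤
      ∑ p ∈ Finset.univ.offDiag, w p.1 * w p.2 * kappa Arel p.1 p.2 := by
    calc ∑ p ∈ Pr, w p.1 * w p.2
        = ∑ p ∈ Pr, w p.1 * w p.2 * kappa Arel p.1 p.2 := by
          apply Finset.sum_congr rfl
          intro p hp
          rw [kappa, if_pos (hreach p hp), Nat.mul_one]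
      _ ≤ _ := Finset.sum_le_sum_of_subset hsub
  exact Nat.add_le_add (Nat.mul_le_mul_left 2 h1) h2
section OrientTemplate
variable {V : Type*} [DecidableEq V] {F : SimpleGraph V}

lemma toward_self {r : V} : toward F r r = r := dif_neg (by simp)

/-- Orientation template: inside the component `c` (rooted at `t`), orient each
edge `{x, parent x}` upward (`x → parent x`) if `x ∈ up`, downward otherwise;
orient all other edges by a fixed well-ordering. -/
def mkOrient (G : MixedGraph V) (c : G.edgeGraph.ConnectedComponent)
    (t : V) (up : Set V) : V → V → Prop :=
  fun x y => s(x, y) ∈ G.edges ∧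
    ((G.edgeGraph.connectedComponentMk x = c ∧ x ≠ t ∧
        y = toward G.edgeGraph t x ∧ x ∈ up) ∨
     (G.edgeGraph.connectedComponentMk y = c ∧ y ≠ t ∧
        x = toward G.edgeGraph t y ∧ y ∉ up) ∨
     (G.edgeGraph.connectedComponentMk x ≠ c ∧ WellOrderingRel x y))

lemma mkOrient_orients (G : MixedGraph V) (hforest : G.edgeGraph.IsAcyclic)
    (c : G.edgeGraph.ConnectedComponent) (t : V)
    (ht : G.edgeGraph.connectedComponentMk t = c) (up : Set V) :
    OrientsEdges (G.edges : Set (Sym2 V)) (mkOrient G c t up) := by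
  constructor
  · intro u v h
    exact Finset.mem_coe.mpr h.1
  · intro x y hmem
    have hmem' : s(x, y) ∈ G.edges := Finset.mem_coe.mp hmem
    have hmem'' : s(y, x) ∈ G.edges := by rwa [Sym2.eq_swap] at hmem'
    have hadj : G.edgeGraph.Adj x y := hmem'
    have hxy : x ≠ y := hadj.ne
    by_cases hc : G.edgeGraph.connectedComponentMk x = c
    · have hcy : G.edgeGraph.connectedComponentMk y = c :=
        (SimpleGraph.ConnectedComponent.connectedComponentMk_eq_of_adj hadj).symm.trans hc
      have hxt : G.edgeGraph.Reachable x t :=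
        SimpleGraph.ConnectedComponent.exact (hc.trans ht.symm)
      have hyt : G.edgeGraph.Reachable y t :=
        SimpleGraph.ConnectedComponent.exact (hcy.trans ht.symm)
      have hpar := toward_parent hforest hadj hxt hyt
      have hnotboth : ¬((x ≠ t ∧ y = toward G.edgeGraph t x) ∧
          (y ≠ t ∧ x = toward G.edgeGraph t y)) := by
        rintro ⟨⟨hx1, hx2⟩, ⟨hy1, hy2⟩⟩
        have d1 := toward_dist hxt hx1
        have d2 := toward_dist hyt hy1
        rw [← hx2] at d1
        rw [← hy2] at d2
        omega
      have hone : (x ≠ t ∧ y = toward G.edgeGraph t x) ∨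
          (y ≠ t ∧ x = toward G.edgeGraph t y) := by
        rcases hpar with h | h
        · left
          refine ⟨?_, h.symm⟩
          rintro rfl
          rw [toward_self] at h
          exact hxy h
        · right
          refine ⟨?_, h.symm⟩
          rintro rfl
          rw [toward_self] at h
          exact hxy.symm h
      constructor
      · rintro ⟨-, hcase⟩ ⟨-, hcase'⟩
        rcases hcase with ⟨_, hx1, hx2, hxu⟩ | ⟨_, hy1, hy2, hyu⟩ | ⟨hne, -⟩
        · rcases hcase' with ⟨_, hy1', hy2', hyu'⟩ | ⟨_, hx1', hx2', hxu'⟩ | ⟨hne', -⟩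
          · exact hnotboth ⟨⟨hx1, hx2⟩, ⟨hy1', hy2'⟩⟩
          · exact hxu' hxu
          · exact hne' hcy
        · rcases hcase' with ⟨_, hy1', hy2', hyu'⟩ | ⟨_, hx1', hx2', hxu'⟩ | ⟨hne', -⟩
          · exact hyu hyu'
          · exact hnotboth ⟨⟨hx1', hx2'⟩, ⟨hy1, hy2⟩⟩
          · exact hne' hcy
        · exact hne hc
      · intro hn
        refine ⟨hmem', ?_⟩
        rcases hone with ⟨hx1, hx2⟩ | ⟨hy1, hy2⟩
        · by_cases hxu : x ∈ up
          · exact Or.inl ⟨hc, hx1, hx2, hxu⟩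
          · exact absurd ⟨hmem'', Or.inr (Or.inl ⟨hc, hx1, hx2, hxu⟩)⟩ hn
        · by_cases hyu : y ∈ up
          · exact absurd ⟨hmem'', Or.inl ⟨hcy, hy1, hy2, hyu⟩⟩ hn
          · exact Or.inr (Or.inl ⟨hcy, hy1, hy2, hyu⟩)
    · have hcy : G.edgeGraph.connectedComponentMk y ≠ c := by
        rw [← SimpleGraph.ConnectedComponent.connectedComponentMk_eq_of_adj hadj]
        exact hc
      have tri : WellOrderingRel x y ∨ x = y ∨ WellOrderingRel y x :=
        trichotomous_of WellOrderingRel x y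
      have asym : ¬(WellOrderingRel x y ∧ WellOrderingRel y x) :=
        fun ⟨h1, h2⟩ => asymm h1 h2
      constructor
      · rintro ⟨-, h⟩ ⟨-, h'⟩
        rcases h with ⟨h1, -⟩ | ⟨h1, -⟩ | ⟨-, hw⟩
        · exact hc h1
        · exact hcy h1
        · rcases h' with ⟨h1', -⟩ | ⟨h1', -⟩ | ⟨-, hw'⟩
          · exact hcy h1'
          · exact hc h1'
          · exact asym ⟨hw, hw'⟩
      · intro hn
        refine ⟨hmem', Or.inr (Or.inr ⟨hc, ?_⟩)⟩
        rcases tri with h | h | h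
        · exact h
        · exact absurd h hxy
        · exact absurd ⟨hmem'', Or.inr (Or.inr ⟨hcy, h⟩)⟩ hn
end OrientTemplate
lemma two_mul_choose_two (u : ℕ) : 2 * Nat.choose u 2 = u * (u - 1) := by
  rcases u with _ | v
  · simp
  · rw [Nat.choose_two_right]
    have hev : 2 ∣ (v + 1) * (v + 1 - 1) := by
      simp only [Nat.add_sub_cancel]
      rcases Nat.even_or_odd v with h | h
      · exact Dvd.dvd.mul_left h.two_dvd _
      · exact Dvd.dvd.mul_right (h.add_one).two_dvd _
    exact Nat.mul_div_cancel' hev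

lemma tree_lemma {V : Type*} [Fintype V] [DecidableEq V] (G : MixedGraph V)
    (hforest : G.edgeGraph.IsAcyclic) (w : V → ℕ) (c : G.edgeGraph.ConnectedComponent)
    [DecidablePred (fun v => G.edgeGraph.connectedComponentMk v = c)]
    (hW2 : 2 ≤ ∑ v ∈ Finset.univ.filter (fun v => G.edgeGraph.connectedComponentMk v = c), w v) :
    ∃ o, OrientsEdges (G.edges : Set (Sym2 V)) o ∧
      (∑ v ∈ Finset.univ.filter (fun v => G.edgeGraph.connectedComponentMk v = c), w v) ^ 2
        ≤ 49 * Rw (G.dig o) w := by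
  set S' : Finset V := Finset.univ.filter (fun v => G.edgeGraph.connectedComponentMk v = c) with hS'
  set W' : ℕ := ∑ v ∈ S', w v with hW'
  classical
  have hmemS : ∀ x, x ∈ S' ↔ G.edgeGraph.connectedComponentMk x = c := by
    intro x
    rw [hS', Finset.mem_filter]
    exact ⟨fun h => h.2, fun h => ⟨Finset.mem_univ x, h⟩⟩
  by_cases heasy : ∃ rr ∈ S', W' ≤ 7 * w rr
  · obtain ⟨rr, hrrS, hrr⟩ := heasy
    have hrrc : G.edgeGraph.connectedComponentMk rr = c := (hmemS rr).mp hrrS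
    set o := mkOrient G c rr Set.univ with ho
    have hor := mkOrient_orients G hforest c rr hrrc Set.univ
    refine ⟨o, hor, ?_⟩
    have hreach' : ∀ x ∈ S', G.edgeGraph.Reachable x rr := fun x hx =>
      SimpleGraph.ConnectedComponent.exact (((hmemS x).mp hx).trans hrrc.symm)
    have hR : ∀ a ∈ S'.erase rr, Relation.ReflTransGen (G.dig o) a rr := by
      have key := reach_target (F := G.edgeGraph) (r := rr) (G.dig o) rr {a | a ∈ S' ∧ a ≠ rr} ?_
      · intro a ha
        exact key a ⟨Finset.mem_of_mem_erase ha, Finset.ne_of_mem_erase ha⟩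
      · rintro a ⟨haS, har⟩
        have hadj := toward_adj (hreach' a haS) har
        refine ⟨hreach' a haS, har, Or.inr ⟨hadj, Or.inl ⟨(hmemS a).mp haS, har, rfl, Set.mem_univ a⟩⟩, ?_⟩
        by_cases h : toward G.edgeGraph rr a = rr
        · exact Or.inr h
        · exact Or.inl ⟨(hmemS _).mpr
            ((SimpleGraph.ConnectedComponent.connectedComponentMk_eq_of_adj hadj).symm.trans
              ((hmemS a).mp haS)), h⟩
    set Pr : Finset (V × V) := (S'.erase rr) ×ˢ {rr} with hPrdef
    have hsub : Pr ⊆ Finset.univ.offDiag := by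
      intro p hp
      rw [hPrdef, Finset.mem_product] at hp
      have h1 := Finset.ne_of_mem_erase hp.1
      have h2 : p.2 = rr := Finset.mem_singleton.mp hp.2
      rw [Finset.mem_offDiag]
      exact ⟨Finset.mem_univ _, Finset.mem_univ _, by rw [h2]; exact h1⟩
    have hRw := Rw_lb (G.dig o) w rr Pr hsub ?_
    swap
    · intro p hp
      rw [hPrdef, Finset.mem_product] at hp
      have h2 : p.2 = rr := Finset.mem_singleton.mp hp.2
      rw [h2]
      exact hR p.1 hp.1
    have hsum : ∑ p ∈ Pr, w p.1 * w p.2 = (∑ a ∈ S'.erase rr, w a) * w rr := by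
      rw [hPrdef, Finset.sum_product, Finset.sum_mul]
      simp
    have hWsplit : w rr + ∑ a ∈ S'.erase rr, w a = W' := by
      rw [hW']
      exact Finset.add_sum_erase _ _ hrrS
    rw [hsum, two_mul_choose_two] at hRw
    have hu1 : 1 ≤ w rr := by omega
    have hgoal : W' ^ 2 ≤ 49 * (w rr * (w rr - 1) + (∑ a ∈ S'.erase rr, w a) * w rr) := by
      obtain ⟨m, hm⟩ : ∃ m, w rr = m + 1 := ⟨w rr - 1, by omega⟩
      have hW'eq : W' = m + 1 + ∑ a ∈ S'.erase rr, w a := by omega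
      have h7 : m + 1 + ∑ a ∈ S'.erase rr, w a ≤ 7 * (m + 1) := by omega
      have h2' : 2 ≤ m + 1 + ∑ a ∈ S'.erase rr, w a := by omega
      rw [hW'eq, hm]
      simp only [Nat.add_sub_cancel]
      nlinarith [h2', h7]
    exact hgoal.trans (Nat.mul_le_mul_left _ hRw)
  · push_neg at heasy
    obtain ⟨r₀, hr₀⟩ := c.exists_rep
    have hr₀S : r₀ ∈ S' := (hmemS r₀).mpr hr₀
    have hreach : ∀ x ∈ S', G.edgeGraph.Reachable x r₀ := fun x hx =>
      SimpleGraph.ConnectedComponent.exact (((hmemS x).mp hx).trans hr₀.symm)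
    have hancS : ∀ {a b : V}, anc G.edgeGraph r₀ a b → a ∈ S' → b ∈ S' := by
      intro a b h ha
      have hr := anc_reachable_ab h
      exact (hmemS b).mpr ((SimpleGraph.ConnectedComponent.sound hr.symm).trans ((hmemS a).mp ha))
    set sub : V → ℕ := fun v => ∑ u ∈ S'.filter (fun u => anc G.edgeGraph r₀ u v), w u with hsub
    have hsubr₀ : sub r₀ = W' := by
      have hfil : S'.filter (fun u => anc G.edgeGraph r₀ u r₀) = S' :=
        Finset.filter_true_of_mem (fun u hu => anc_root (hreach u hu))
      simp only [hsub, hfil, hW']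
    have hcand : (S'.filter (fun v => 3 * W' ≤ 7 * sub v)).Nonempty :=
      ⟨r₀, Finset.mem_filter.mpr ⟨hr₀S, by rw [hsubr₀]; omega⟩⟩
    obtain ⟨v₀, hv₀mem, hv₀max⟩ :=
      Finset.exists_max_image _ (fun v => G.edgeGraph.dist v r₀) hcand
    rw [Finset.mem_filter] at hv₀mem
    obtain ⟨hv₀S, hv₀sub⟩ := hv₀mem
    have hv₀reach := hreach v₀ hv₀S
    have hv₀c : G.edgeGraph.connectedComponentMk v₀ = c := (hmemS v₀).mp hv₀S
    set Ch : Finset V := S'.filter (fun u => ancStep G.edgeGraph r₀ u v₀) with hCh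
    have hkey : ∀ ch ∈ Ch, ∀ ch' ∈ Ch, ch ≠ ch' → ¬ anc G.edgeGraph r₀ ch ch' := by
      intro ch hch ch' hch' hne h
      rcases Relation.ReflTransGen.cases_head h with rfl | ⟨z, hz, hzc⟩
      · exact hne rfl
      · rw [Finset.mem_filter] at hch hch'
        have hzv : z = v₀ := hz.2.2.trans hch.2.2.2.symm
        subst hzv
        have hd1 := ancStep_dist hch'.2
        have hd2 := anc_dist hzc
        omega
    have hdisj2 : (↑Ch : Set V).PairwiseDisjoint
        (fun ch => S'.filter (fun u => anc G.edgeGraph r₀ u ch)) := by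
      intro ch hch ch' hch' hne
      simp only [Function.onFun]
      rw [Finset.disjoint_left]
      intro u hu1 hu2
      rw [Finset.mem_filter] at hu1 hu2
      rcases anc_comparable hu1.2 hu2.2 with h | h
      · exact hkey ch hch ch' hch' hne h
      · exact hkey ch' hch' ch hch hne.symm h
    have hdecomp : S'.filter (fun u => anc G.edgeGraph r₀ u v₀) =
        insert v₀ (Ch.biUnion (fun ch => S'.filter (fun u => anc G.edgeGraph r₀ u ch))) := by
      ext u
      simp only [Finset.mem_insert, Finset.mem_biUnion, Finset.mem_filter]
      constructor
      · rintro ⟨huS, hanc⟩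
        by_cases hu : u = v₀
        · exact Or.inl hu
        · right
          rcases Relation.ReflTransGen.cases_tail hanc with h | ⟨ch, h1, h2⟩
          · exact absurd h.symm hu
          · exact ⟨ch, Finset.mem_filter.mpr ⟨hancS h1 huS, h2⟩, huS, h1⟩
      · rintro (rfl | ⟨ch, hchmem, huS, hanc⟩)
        · exact ⟨hv₀S, Relation.ReflTransGen.refl⟩
        · exact ⟨huS, hanc.tail (Finset.mem_filter.mp hchmem).2⟩
    have hv₀notin : v₀ ∉ Ch.biUnion (fun ch => S'.filter (fun u => anc G.edgeGraph r₀ u ch)) := by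
      rw [Finset.mem_biUnion]
      rintro ⟨ch, hch, hmem⟩
      rw [Finset.mem_filter] at hmem
      rw [Finset.mem_filter] at hch
      have hd1 := ancStep_dist hch.2
      have hd2 := anc_dist hmem.2
      omega
    have hsubsum : sub v₀ = w v₀ + ∑ ch ∈ Ch, sub ch := by
      simp only [hsub]
      rw [hdecomp, Finset.sum_insert hv₀notin, Finset.sum_biUnion hdisj2]
    have hchbound : ∀ ch ∈ Ch, 7 * sub ch ≤ 3 * W' := by
      intro ch hch
      by_contra hgt
      push_neg at hgt
      rw [Finset.mem_filter] at hch
      have hchcand : ch ∈ S'.filter (fun v => 3 * W' ≤ 7 * sub v) :=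
        Finset.mem_filter.mpr ⟨hch.1, by omega⟩
      have hle := hv₀max ch hchcand
      have hd := ancStep_dist hch.2
      omega
    have htot : W' ≤ 7 * ∑ ch ∈ Ch, sub ch := by
      have h1 : 7 * w v₀ < W' := heasy v₀ hv₀S
      omega
    obtain ⟨P, hPsub, hP4, hPor⟩ := greedy_subset W' sub Ch hchbound
    have hPlow : W' ≤ 7 * ∑ ch ∈ P, sub ch := by
      rcases hPor with h | rfl
      · exact h
      · exact htot
    set Aset : Set V := {u | ∃ ch ∈ P, anc G.edgeGraph r₀ u ch} with hAset
    set A' : Finset V := P.biUnion (fun ch => S'.filter (fun u => anc G.edgeGraph r₀ u ch)) with hA'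
    have hmemA : ∀ u, u ∈ A' ↔ (u ∈ S' ∧ u ∈ Aset) := by
      intro u
      rw [hA', Finset.mem_biUnion]
      constructor
      · rintro ⟨ch, hch, hu⟩
        rw [Finset.mem_filter] at hu
        exact ⟨hu.1, ⟨ch, hch, hu.2⟩⟩
      · rintro ⟨huS, ch, hch, hanc⟩
        exact ⟨ch, hch, Finset.mem_filter.mpr ⟨huS, hanc⟩⟩
    have hA'sub : A' ⊆ S' := fun u hu => ((hmemA u).mp hu).1
    have hwA : ∑ u ∈ A', w u = ∑ ch ∈ P, sub ch := by
      rw [hA', Finset.sum_biUnion (hdisj2.subset (by exact_mod_cast hPsub))]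
    have hAdist : ∀ u ∈ Aset, G.edgeGraph.dist v₀ r₀ + 1 ≤ G.edgeGraph.dist u r₀ := by
      rintro u ⟨ch, hch, hanc⟩
      have hchC := hPsub hch
      rw [Finset.mem_filter] at hchC
      have hd1 := ancStep_dist hchC.2
      have hd2 := anc_dist hanc
      omega
    have hv₀Aset : v₀ ∉ Aset := fun h => by have := hAdist v₀ h; omega
    have hAner₀ : ∀ u ∈ Aset, u ≠ r₀ := by
      intro u hu heq
      have h1 := hAdist u hu
      rw [heq, SimpleGraph.dist_self] at h1
      omega
    set up : Set V := Aset ∪ {x | anc G.edgeGraph r₀ v₀ x} with hup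
    set o := mkOrient G c r₀ up with ho
    have hor := mkOrient_orients G hforest c r₀ hr₀ up
    refine ⟨o, hor, ?_⟩
    -- (1) every a ∈ A' reaches v₀
    have hreachA : ∀ a ∈ A', Relation.ReflTransGen (G.dig o) a v₀ := by
      have key := reach_target (F := G.edgeGraph) (r := r₀) (G.dig o) v₀ (↑A' : Set V) ?_
      · intro a ha
        exact key a (Finset.mem_coe.mpr ha)
      · intro a ha
        rw [Finset.mem_coe, hmemA] at ha
        obtain ⟨haS, haA⟩ := ha
        have har : a ≠ r₀ := hAner₀ a haA
        have hareach := hreach a haS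
        have hadj := toward_adj hareach har
        refine ⟨hareach, har,
          Or.inr ⟨hadj, Or.inl ⟨(hmemS a).mp haS, har, rfl, Or.inl haA⟩⟩, ?_⟩
        obtain ⟨ch, hch, hanc⟩ := haA
        rcases Relation.ReflTransGen.cases_head hanc with rfl | ⟨z, hz, hzc⟩
        · have hchC := hPsub hch
          rw [Finset.mem_filter] at hchC
          exact Or.inr hchC.2.2.2.symm
        · left
          rw [Finset.mem_coe, hmemA]
          have hzt : z = toward G.edgeGraph r₀ a := hz.2.2
          have htS : toward G.edgeGraph r₀ a ∈ S' := (hmemS _).mpr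
            ((SimpleGraph.ConnectedComponent.connectedComponentMk_eq_of_adj hadj).symm.trans
              ((hmemS a).mp haS))
          exact ⟨htS, ⟨ch, hch, hzt ▸ hzc⟩⟩
    -- (2a) v₀ reaches everything on its path to the root
    have hreachU : ∀ x, anc G.edgeGraph r₀ v₀ x → Relation.ReflTransGen (G.dig o) v₀ x := by
      apply reach_along
      intro a b hstep hanc
      have haS : a ∈ S' := hancS hanc hv₀S
      exact Or.inr ⟨ancStep_adj hstep,
        Or.inl ⟨(hmemS a).mp haS, hstep.2.1, hstep.2.2, Or.inr hanc⟩⟩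
    -- (2b) v₀ reaches everything outside A
    have hreachB : ∀ b, G.edgeGraph.Reachable b r₀ → b ∉ Aset →
        Relation.ReflTransGen (G.dig o) v₀ b := by
      apply descend (G.dig o) v₀ Aset hv₀reach
      · rintro b hb hbr ⟨ch, hch, hanc⟩
        exact ⟨ch, hch, hanc.head ⟨hb, hbr, rfl⟩⟩
      · exact hreachU
      · intro b hb hbr hbA hbU
        have hbc : G.edgeGraph.connectedComponentMk b = c :=
          (SimpleGraph.ConnectedComponent.sound hb).trans hr₀
        have hnup : b ∉ up := by
          rw [hup]
          rintro (h | h)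
          · exact hbA h
          · exact hbU h
        exact Or.inr ⟨(toward_adj hb hbr).symm, Or.inr (Or.inl ⟨hbc, hbr, rfl, hnup⟩)⟩
    -- the pair set
    set B' : Finset V := (S' \ A').erase v₀ with hB'
    have hv₀SA : v₀ ∈ S' \ A' := Finset.mem_sdiff.mpr
      ⟨hv₀S, fun h => hv₀Aset ((hmemA v₀).mp h).2⟩
    have hBS : ∀ b ∈ B', b ∈ S' ∧ b ∉ Aset ∧ b ≠ v₀ := by
      intro b hb
      rw [hB'] at hb
      have hne := Finset.ne_of_mem_erase hb
      have hmem := Finset.mem_of_mem_erase hb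
      rw [Finset.mem_sdiff] at hmem
      exact ⟨hmem.1, fun h => hmem.2 ((hmemA b).mpr ⟨hmem.1, h⟩), hne⟩
    set Pr : Finset (V × V) := (A' ×ˢ insert v₀ B') ∪ ({v₀} ×ˢ B') with hPr
    have hPrsub : Pr ⊆ Finset.univ.offDiag := by
      intro p hp
      rw [hPr, Finset.mem_union] at hp
      rw [Finset.mem_offDiag]
      refine ⟨Finset.mem_univ _, Finset.mem_univ _, ?_⟩
      rcases hp with hp | hp
      · rw [Finset.mem_product, Finset.mem_insert] at hp
        obtain ⟨h1, h2⟩ := hp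
        rcases h2 with h2 | h2
        · intro heq
          rw [heq, h2] at h1
          exact hv₀Aset ((hmemA _).mp h1).2
        · intro heq
          have := (hBS _ h2).2.1
          rw [← heq] at this
          exact this ((hmemA _).mp h1).2
      · rw [Finset.mem_product, Finset.mem_singleton] at hp
        intro heq
        exact (hBS _ hp.2).2.2 (heq.symm.trans hp.1)
    have hPrreach : ∀ p ∈ Pr, Relation.ReflTransGen (G.dig o) p.1 p.2 := by
      intro p hp
      rw [hPr, Finset.mem_union] at hp
      rcases hp with hp | hp
      · rw [Finset.mem_product, Finset.mem_insert] at hp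
        obtain ⟨h1, h2⟩ := hp
        have hr1 := hreachA p.1 h1
        rcases h2 with h2 | h2
        · exact h2 ▸ hr1
        · obtain ⟨hbS, hbA, _⟩ := hBS _ h2
          exact hr1.trans (hreachB p.2 (hreach _ hbS) hbA)
      · rw [Finset.mem_product, Finset.mem_singleton] at hp
        obtain ⟨hbS, hbA, _⟩ := hBS _ hp.2
        rw [hp.1]
        exact hreachB p.2 (hreach _ hbS) hbA
    have hRw := Rw_lb (G.dig o) w v₀ Pr hPrsub hPrreach
    -- sums
    have hv₀B : v₀ ∉ B' := Finset.notMem_erase _ _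
    have hAv₀B : Disjoint (A' ×ˢ insert v₀ B') ({v₀} ×ˢ B' : Finset (V × V)) := by
      rw [Finset.disjoint_left]
      intro p hp1 hp2
      rw [Finset.mem_product] at hp1 hp2
      have h1 := hp1.1
      have h2 := Finset.mem_singleton.mp hp2.1
      rw [h2] at h1
      exact hv₀Aset ((hmemA _).mp h1).2
    have hsumPr : ∑ p ∈ Pr, w p.1 * w p.2 =
        (∑ u ∈ A', w u) * (w v₀ + ∑ b ∈ B', w b) + w v₀ * ∑ b ∈ B', w b := by
      rw [hPr, Finset.sum_union hAv₀B, Finset.sum_product, Finset.sum_product]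
      congr 1
      · calc ∑ x ∈ A', ∑ y ∈ insert v₀ B', w (x, y).1 * w (x, y).2
            = ∑ x ∈ A', w x * ∑ y ∈ insert v₀ B', w y := by
              refine Finset.sum_congr rfl fun x _ => ?_
              simp [Finset.mul_sum]
          _ = (∑ u ∈ A', w u) * ∑ y ∈ insert v₀ B', w y := by rw [Finset.sum_mul]
          _ = (∑ u ∈ A', w u) * (w v₀ + ∑ b ∈ B', w b) := by rw [Finset.sum_insert hv₀B]
      · rw [Finset.sum_singleton]
        simp [Finset.mul_sum]
    have hApartB : ∑ u ∈ A', w u + (w v₀ + ∑ b ∈ B', w b) = W' := by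
      have h1 : ∑ u ∈ S' \ A', w u + ∑ u ∈ A', w u = ∑ u ∈ S', w u :=
        Finset.sum_sdiff hA'sub
      have h2 : w v₀ + ∑ b ∈ B', w b = ∑ u ∈ S' \ A', w u := by
        rw [hB']
        exact Finset.add_sum_erase _ _ hv₀SA
      omega
    -- final arithmetic
    have hR2 : (∑ u ∈ A', w u) * (w v₀ + ∑ b ∈ B', w b) + w v₀ * ∑ b ∈ B', w b
        ≤ Rw (G.dig o) w := by
      rw [← hsumPr]
      omega
    have h7a : W' ≤ 7 * ∑ u ∈ A', w u := by rw [hwA]; exact hPlow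
    have h7a4 : 7 * ∑ u ∈ A', w u ≤ 4 * W' := by rw [hwA]; exact hP4
    have h7q : 3 * W' ≤ 7 * (w v₀ + ∑ b ∈ B', w b) := by omega
    calc W' ^ 2 = W' * W' := sq W'
      _ ≤ W' * (3 * W') := Nat.mul_le_mul_left _ (by omega)
      _ ≤ (7 * ∑ u ∈ A', w u) * (7 * (w v₀ + ∑ b ∈ B', w b)) := Nat.mul_le_mul h7a h7q
      _ = 49 * ((∑ u ∈ A', w u) * (w v₀ + ∑ b ∈ B', w b)) := by ring
      _ ≤ 49 * Rw (G.dig o) w := Nat.mul_le_mul_left _ (by omega)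
lemma key_lemma {V : Type*} [Fintype V] [DecidableEq V] (G : MixedGraph V)
    (hconn : G.UG.Connected) (hforest : G.edgeGraph.IsAcyclic)
    (hk : 1 ≤ G.arcs.card) (w : V → ℕ)
    (hW : 14 * G.arcs.card + 1 ≤ ∑ v, w v) :
    ∃ o, OrientsEdges (G.edges : Set (Sym2 V)) o ∧
      (∑ v, w v) ^ 2 ≤ 196 * G.arcs.card ^ 2 * Rw (G.dig o) w := by
  classical
  set k := G.arcs.card with hkdef
  set comps : Finset (G.edgeGraph.ConnectedComponent) :=
    Finset.univ.image G.edgeGraph.connectedComponentMk with hcomps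
  set wt : G.edgeGraph.ConnectedComponent → ℕ :=
    fun c => ∑ v ∈ Finset.univ.filter (fun v => G.edgeGraph.connectedComponentMk v = c), w v
    with hwt
  have hsplit : ∑ c ∈ comps, wt c = ∑ v, w v :=
    Finset.sum_fiberwise_of_maps_to (fun v _ => Finset.mem_image_of_mem _ (Finset.mem_univ v)) w
  have hVne : (Finset.univ : Finset V).Nonempty := by
    rcases Finset.eq_empty_or_nonempty (Finset.univ : Finset V) with h | h
    · rw [h] at hW ⊢
      simp at hW
    · exact h
  have hcompsne : comps.Nonempty := hVne.image _
  -- some component has weight at least (∑ w) / comps.card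
  have hpigeon : ∃ c ∈ comps, ∑ v, w v ≤ comps.card * wt c := by
    by_contra hno
    push_neg at hno
    have hsum : ∑ c ∈ comps, comps.card * wt c ≤ ∑ c ∈ comps, (∑ v, w v - 1) :=
      Finset.sum_le_sum (fun c hc => by have := hno c hc; omega)
    rw [← Finset.mul_sum, hsplit, Finset.sum_const, smul_eq_mul] at hsum
    have hc1 : 0 < comps.card := Finset.card_pos.mpr hcompsne
    have := Nat.le_of_mul_le_mul_left hsum hc1
    omega
  obtain ⟨c, hc, hcW⟩ := hpigeon
  -- comps.card ≤ 2 * k  (or there is just one component)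
  have hcard : comps.card * wt c ≤ 2 * k * wt c := by
    rcases Nat.lt_or_ge comps.card 2 with h | h
    · have h1 : 1 ≤ comps.card := Finset.card_pos.mpr hcompsne
      have : comps.card = 1 := by omega
      nlinarith [Nat.zero_le (wt c), hk]
    · -- at least two components: every component contains an arc endpoint
      set E : Finset V := G.arcs.image Prod.fst ∪ G.arcs.image Prod.snd with hE
      have hEcard : E.card ≤ 2 * k := by
        calc E.card ≤ (G.arcs.image Prod.fst).card + (G.arcs.image Prod.snd).card :=
              Finset.card_union_le _ _
          _ ≤ k + k := Nat.add_le_add (Finset.card_image_le) (Finset.card_image_le)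
          _ = 2 * k := by omega
      have hwitness : ∀ c' ∈ comps, ∃ v, G.edgeGraph.connectedComponentMk v = c' ∧ v ∈ E := by
        intro c' hc'
        rw [hcomps, Finset.mem_image] at hc'
        obtain ⟨v₁, -, hv₁⟩ := hc'
        -- find a vertex in another component
        obtain ⟨c'', hc'', hne⟩ := Finset.exists_mem_ne h c'
        rw [hcomps, Finset.mem_image] at hc''
        obtain ⟨u, -, hu⟩ := hc''
        have hunotin : u ∉ {x | G.edgeGraph.connectedComponentMk x = c'} := by
          intro hmem
          exact hne (hu ▸ hmem)
        have hv₁in : v₁ ∈ {x | G.edgeGraph.connectedComponentMk x = c'} := hv₁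
        obtain ⟨p⟩ := hconn.preconnected v₁ u
        obtain ⟨d, -, hd1, hd2⟩ := p.exists_boundary_dart _ hv₁in hunotin
        have hadj : G.UG.Adj d.fst d.snd := d.adj
        rcases hadj with hedge | harc | harc
        · exfalso
          have : G.edgeGraph.Adj d.fst d.snd := hedge
          exact hd2 ((SimpleGraph.ConnectedComponent.connectedComponentMk_eq_of_adj this).symm.trans hd1)
        · refine ⟨d.fst, hd1, ?_⟩
          rw [hE, Finset.mem_union]
          exact Or.inl (Finset.mem_image.mpr ⟨(d.fst, d.snd), harc, rfl⟩)
        · refine ⟨d.fst, hd1, ?_⟩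
          rw [hE, Finset.mem_union]
          exact Or.inr (Finset.mem_image.mpr ⟨(d.snd, d.fst), harc, rfl⟩)
      choose f hf1 hf2 using hwitness
      have hinj : Set.InjOn (fun c' => if h : c' ∈ comps then f c' h else hVne.choose) comps := by
        intro a ha b hb hab
        simp only [Finset.mem_coe.mp ha, Finset.mem_coe.mp hb, dif_pos] at hab
        rw [← hf1 a (Finset.mem_coe.mp ha), ← hf1 b (Finset.mem_coe.mp hb), hab]
      have hcard2 : comps.card ≤ E.card := by
        apply Finset.card_le_card_of_injOn _ ?_ hinj
        intro c' hc'
        simp only [Finset.mem_coe] at hc' ⊢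
        simp only [hc', dif_pos]
        exact hf2 c' hc'
      exact Nat.mul_le_mul_right _ (hcard2.trans hEcard)
  have hWc : ∑ v, w v ≤ 2 * k * wt c := hcW.trans hcard
  -- the chosen component is heavy
  have hwc2 : 2 ≤ wt c := by nlinarith [hW, hk, hWc]
  obtain ⟨o, ho, hRo⟩ := tree_lemma G hforest w c hwc2
  refine ⟨o, ho, ?_⟩
  calc (∑ v, w v) ^ 2 ≤ (2 * k * wt c) ^ 2 := Nat.pow_le_pow_left hWc 2
    _ = 4 * k ^ 2 * (wt c ^ 2) := by ring
    _ ≤ 4 * k ^ 2 * (49 * Rw (G.dig o) w) := Nat.mul_le_mul_left _ hRo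
    _ = 196 * k ^ 2 * Rw (G.dig o) w := by ring
/-- If `D₀` is an orientation of `G` within additive error `(ε/(196 k²)) (∑ w)²`
of every orientation, then `D₀` is `(1 − ε)`-optimal, for any connected mixed graph
whose undirected edges form a forest and with `k = |A| ≥ 1`. -/
theorem stmt12 {V : Type*} [Fintype V] [DecidableEq V] (ε : ℝ) (hε : 0 < ε)
    (G : MixedGraph V) (hconn : G.UG.Connected) (hforest : G.edgeGraph.IsAcyclic)
    (hk : 1 ≤ G.arcs.card) (w : V → ℕ)
    (o₀ : V → V → Prop) (ho₀ : OrientsEdges (G.edges : Set (Sym2 V)) o₀)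
    (hopt : ∀ o, OrientsEdges (G.edges : Set (Sym2 V)) o →
      (Rw (G.dig o) w : ℝ) - ε / (196 * (G.arcs.card : ℝ) ^ 2) * (∑ v, (w v : ℝ)) ^ 2
        ≤ (Rw (G.dig o₀) w : ℝ)) :
    ∀ o, OrientsEdges (G.edges : Set (Sym2 V)) o →
      (1 - ε) * (Rw (G.dig o) w : ℝ) ≤ (Rw (G.dig o₀) w : ℝ) := by
  intro o ho
  have hR0 : (0:ℝ) ≤ (Rw (G.dig o₀) w : ℝ) := Nat.cast_nonneg _
  have hRo : (0:ℝ) ≤ (Rw (G.dig o) w : ℝ) := Nat.cast_nonneg _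
  by_cases hε1 : ε ≤ 1
  swap
  · have h1 : (1 - ε) ≤ 0 := by linarith
    exact le_trans (mul_nonpos_of_nonpos_of_nonneg h1 hRo) hR0
  have hkR : (0:ℝ) < 196 * (G.arcs.card : ℝ) ^ 2 := by
    have : (1:ℝ) ≤ (G.arcs.card : ℝ) := by exact_mod_cast hk
    nlinarith
  have hWcast : (∑ v, (w v : ℝ)) = ((∑ v, w v : ℕ) : ℝ) := by push_cast; ring
  have h2 := hopt o ho
  by_cases hbig : 14 * G.arcs.card + 1 ≤ ∑ v, w v
  · obtain ⟨ot, hot, hotR⟩ := key_lemma G hconn hforest hk w hbig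
    have h1 := hopt ot hot
    have hcast : ((∑ v, w v : ℕ) : ℝ) ^ 2
        ≤ 196 * (G.arcs.card : ℝ) ^ 2 * (Rw (G.dig ot) w : ℝ) := by
      exact_mod_cast hotR
    have hcw : ε / (196 * (G.arcs.card : ℝ) ^ 2) * (∑ v, (w v : ℝ)) ^ 2
        ≤ ε * (Rw (G.dig ot) w : ℝ) := by
      have hd : ((∑ v, w v : ℕ) : ℝ) ^ 2 / (196 * (G.arcs.card : ℝ) ^ 2)
          ≤ (Rw (G.dig ot) w : ℝ) := by
        rw [div_le_iff₀ hkR]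
        calc ((∑ v, w v : ℕ) : ℝ) ^ 2
            ≤ 196 * (G.arcs.card : ℝ) ^ 2 * (Rw (G.dig ot) w : ℝ) := hcast
          _ = (Rw (G.dig ot) w : ℝ) * (196 * (G.arcs.card : ℝ) ^ 2) := by ring
      have heq : ε / (196 * (G.arcs.card : ℝ) ^ 2) * ((∑ v, w v : ℕ) : ℝ) ^ 2
          = ε * (((∑ v, w v : ℕ) : ℝ) ^ 2 / (196 * (G.arcs.card : ℝ) ^ 2)) := by ring
      rw [hWcast, heq]
      exact mul_le_mul_of_nonneg_left hd (le_of_lt hε)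
    rcases le_total (Rw (G.dig o) w : ℝ) (Rw (G.dig ot) w : ℝ) with hle | hle
    · nlinarith [mul_nonneg (by linarith : (0:ℝ) ≤ 1 - ε)
        (by linarith : (0:ℝ) ≤ (Rw (G.dig ot) w : ℝ) - (Rw (G.dig o) w : ℝ))]
    · nlinarith [mul_le_mul_of_nonneg_left hle (le_of_lt hε)]
  · push_neg at hbig
    have hb' : ∑ v, w v ≤ 14 * G.arcs.card := by omega
    have hWn : (∑ v, w v) ^ 2 ≤ 196 * G.arcs.card ^ 2 := by
      calc (∑ v, w v) ^ 2 = (∑ v, w v) * (∑ v, w v) := sq _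
        _ ≤ (14 * G.arcs.card) * (14 * G.arcs.card) := Nat.mul_le_mul hb' hb'
        _ = 196 * G.arcs.card ^ 2 := by ring
    have hWr : (∑ v, (w v : ℝ)) ^ 2 ≤ 196 * (G.arcs.card : ℝ) ^ 2 := by
      rw [hWcast]
      exact_mod_cast hWn
    have hcw : ε / (196 * (G.arcs.card : ℝ) ^ 2) * (∑ v, (w v : ℝ)) ^ 2 ≤ ε := by
      rw [div_mul_eq_mul_div, div_le_iff₀ hkR]
      nlinarith [hWr, hε]
    by_cases hR0' : Rw (G.dig o) w = 0
    · rw [hR0']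
      simpa using hR0
    · have hR1 : (1:ℝ) ≤ (Rw (G.dig o) w : ℝ) := by
        have : 1 ≤ Rw (G.dig o) w := Nat.one_le_iff_ne_zero.mpr hR0'
        exact_mod_cast this
      nlinarith [mul_le_mul_of_nonneg_left hR1 (le_of_lt hε)]
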